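/- Let Y be a square matrix over ℤ satisfying (Y - I)^3 = 0 and Y ≡ I (mod 2). Then for every integer m ≥ 2, Y^m ≡ I (mod 2m). -/
import Mathlib
set_option maxHeartbeats 1000000


/-- Let `Y` be a square integer matrix with `(Y - I)^3 = 0` and `Y ≡ I (mod 2)`
(entrywise). Then for every integer `m ≥ 2`, `Y ≡ I (mod 2m)` entrywise. -/
theorem pow_congr_one_mod_two_mul_of_two_le {n : ℕ} (Y : Matrix (Fin n) (Fin n) ℤ)
    (hcube : (Y - 1) ^ 3 = 0) (hmod2 : ∀ i j, (2 : ℤ) ∣ (Y - 1) i j)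
    (m : ℕ) (hm : 2 ≤ m) :
    ∀ i j, ((2 * m : ℕ) : ℤ) ∣ (Y ^ m - 1) i j := by
  set N : Matrix (Fin n) (Fin n) ℤ := Y - 1 with hN
  have hY : Y = 1 + N := by rw [hN]; abel
  have key : ∀ p : ℕ, Y ^ p = 1 + (p : ℤ) • N + ((p.choose 2 : ℤ)) • N ^ 2 := by
    intro p
    induction p with
    | zero => simp
    | succ q ih =>
      have hch : ((q + 1).choose 2 : ℤ) = (q.choose 2 : ℤ) + q := by
        rw [Nat.choose_succ_succ]
        push_cast
        simp [Nat.choose_one_right]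
        ring
      have hN3 : N ^ 3 = 0 := hcube
      calc Y ^ (q + 1) = Y ^ q * (1 + N) := by rw [pow_succ, ← hY]
        _ = (1 + (q : ℤ) • N + ((q.choose 2 : ℤ)) • N ^ 2) * (1 + N) := by rw [ih]
        _ = 1 + ((q : ℤ) + 1) • N + ((q.choose 2 : ℤ) + q) • N ^ 2
              + (q.choose 2 : ℤ) • N ^ 3 := by
            simp only [add_smul, one_smul, mul_add, add_mul, one_mul, mul_one, smul_mul_assoc]
            rw [pow_succ, ← pow_two]
            abel
        _ = 1 + ((q + 1 : ℕ) : ℤ) • N + (((q + 1).choose 2 : ℤ)) • N ^ 2 := by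
            rw [hN3, hch]; push_cast; simp
  intro i j
  have h4 : (4 : ℤ) ∣ (N ^ 2) i j := by
    have : (N ^ 2) i j = ∑ k, N i k * N k j := by
      rw [pow_two]; rfl
    rw [this]
    refine Finset.dvd_sum fun k _ => ?_
    obtain ⟨a, ha⟩ := hmod2 i k
    obtain ⟨b, hb⟩ := hmod2 k j
    rw [hN] at *
    rw [ha, hb]; ring_nf; exact ⟨a * b, by ring⟩
  obtain ⟨s, hs⟩ := h4
  obtain ⟨t, ht⟩ := hmod2 i j
  have hentry : (Y ^ m - 1) i j = (m : ℤ) * N i j + (m.choose 2 : ℤ) * (N ^ 2) i j := by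
    rw [key m]
    simp only [Matrix.sub_apply, Matrix.add_apply, Matrix.smul_apply, Matrix.one_apply_eq,
      smul_eq_mul]
    ring
  have ht' : N i j = 2 * t := ht
  rw [hentry, hs, ht']
  have hm1 : 1 ≤ m := le_trans (by norm_num) hm
  have hch2 : (m.choose 2 : ℤ) * 2 = (m : ℤ) * ((m : ℤ) - 1) := by
    have := Nat.choose_two_right m
    have h2 : m.choose 2 * 2 = m * (m - 1) := by
      rw [this, Nat.div_mul_cancel (Nat.even_mul_pred_self m).two_dvd]
    have := congrArg (Nat.cast : ℕ → ℤ) h2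
    push_cast [Nat.cast_sub hm1] at this
    linarith [this]
  push_cast
  refine dvd_add ⟨t, by ring⟩ ⟨((m : ℤ) - 1) * s, ?_⟩
  calc (m.choose 2 : ℤ) * (4 * s) = ((m.choose 2 : ℤ) * 2) * (2 * s) := by ring
    _ = 2 * (m : ℤ) * (((m : ℤ) - 1) * s) := by rw [hch2]; ring
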